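/- If U on X and V on Y are equivalent after extension, then U can be approximated in operator norm by invertible operators on X if and only if V can be approximated in operator norm by invertible operators on Y. -/

import Mathlib

set_option linter.unusedSectionVars false


open ContinuousLinearMap

/-- 2×2 block operator matrix `[[A, B],[C, D]] : X ⊕ Y → X' ⊕ Y'`. -/
noncomputable def blk {X Y X' Y' : Type*} [NormedAddCommGroup X] [NormedSpace ℝ X]
    [NormedAddCommGroup Y] [NormedSpace ℝ Y] [NormedAddCommGroup X'] [NormedSpace ℝ X']
    [NormedAddCommGroup Y'] [NormedSpace ℝ Y']
    (A : X →L[ℝ] X') (B : Y →L[ℝ] X') (C : X →L[ℝ] Y') (D : Y →L[ℝ] Y') :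
    (X × Y) →L[ℝ] (X' × Y') :=
  (A.coprod B).prod (C.coprod D)

section blocks
variable {X Y X' Y' : Type*} [NormedAddCommGroup X] [NormedSpace ℝ X]
    [NormedAddCommGroup Y] [NormedSpace ℝ Y] [NormedAddCommGroup X'] [NormedSpace ℝ X']
    [NormedAddCommGroup Y'] [NormedSpace ℝ Y']

/-- (1,1)-entry of a block operator. -/
noncomputable def b11 (T : (X × Y) →L[ℝ] (X' × Y')) : X →L[ℝ] X' :=
  (ContinuousLinearMap.fst ℝ X' Y').comp (T.comp (ContinuousLinearMap.inl ℝ X Y))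

/-- (1,2)-entry of a block operator. -/
noncomputable def b12 (T : (X × Y) →L[ℝ] (X' × Y')) : Y →L[ℝ] X' :=
  (ContinuousLinearMap.fst ℝ X' Y').comp (T.comp (ContinuousLinearMap.inr ℝ X Y))

/-- (2,1)-entry of a block operator. -/
noncomputable def b21 (T : (X × Y) →L[ℝ] (X' × Y')) : X →L[ℝ] Y' :=
  (ContinuousLinearMap.snd ℝ X' Y').comp (T.comp (ContinuousLinearMap.inl ℝ X Y))

/-- (2,2)-entry of a block operator. -/
noncomputable def b22 (T : (X × Y) →L[ℝ] (X' × Y')) : Y →L[ℝ] Y' :=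
  (ContinuousLinearMap.snd ℝ X' Y').comp (T.comp (ContinuousLinearMap.inr ℝ X Y))

end blocks

section myblocks
variable {X Y X' Y' : Type*} [NormedAddCommGroup X] [NormedSpace ℝ X]
    [NormedAddCommGroup Y] [NormedSpace ℝ Y] [NormedAddCommGroup X'] [NormedSpace ℝ X']
    [NormedAddCommGroup Y'] [NormedSpace ℝ Y']

lemma blk_apply (A : X →L[ℝ] X') (B : Y →L[ℝ] X') (C : X →L[ℝ] Y') (D : Y →L[ℝ] Y')
    (x : X) (y : Y) : blk A B C D (x, y) = (A x + B y, C x + D y) := by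
  simp [blk]

lemma b11_apply (T : (X × Y) →L[ℝ] (X' × Y')) (x : X) : b11 T x = (T (x, 0)).1 := rfl
lemma b12_apply (T : (X × Y) →L[ℝ] (X' × Y')) (y : Y) : b12 T y = (T (0, y)).1 := rfl
lemma b21_apply (T : (X × Y) →L[ℝ] (X' × Y')) (x : X) : b21 T x = (T (x, 0)).2 := rfl
lemma b22_apply (T : (X × Y) →L[ℝ] (X' × Y')) (y : Y) : b22 T y = (T (0, y)).2 := rfl

lemma apply_eq_blocks (T : (X × Y) →L[ℝ] (X' × Y')) (x : X) (y : Y) :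
    T (x, y) = (b11 T x + b12 T y, b21 T x + b22 T y) := by
  have h : ((x, y) : X × Y) = (x, 0) + (0, y) := by simp
  rw [h, map_add]
  rfl

lemma b11_blk (A : X →L[ℝ] X') (B : Y →L[ℝ] X') (C : X →L[ℝ] Y') (D : Y →L[ℝ] Y') :
    b11 (blk A B C D) = A := by
  ext x; simp [b11_apply, blk_apply]

lemma b12_blk (A : X →L[ℝ] X') (B : Y →L[ℝ] X') (C : X →L[ℝ] Y') (D : Y →L[ℝ] Y') :
    b12 (blk A B C D) = B := by
  ext y; simp [b12_apply, blk_apply]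

lemma b21_blk (A : X →L[ℝ] X') (B : Y →L[ℝ] X') (C : X →L[ℝ] Y') (D : Y →L[ℝ] Y') :
    b21 (blk A B C D) = C := by
  ext x; simp [b21_apply, blk_apply]

lemma b22_blk (A : X →L[ℝ] X') (B : Y →L[ℝ] X') (C : X →L[ℝ] Y') (D : Y →L[ℝ] Y') :
    b22 (blk A B C D) = D := by
  ext y; simp [b22_apply, blk_apply]

lemma b11_sub (T S : (X × Y) →L[ℝ] (X' × Y')) : b11 (T - S) = b11 T - b11 S := by
  ext x; simp [b11_apply]
lemma b12_sub (T S : (X × Y) →L[ℝ] (X' × Y')) : b12 (T - S) = b12 T - b12 S := by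
  ext y; simp [b12_apply]
lemma b21_sub (T S : (X × Y) →L[ℝ] (X' × Y')) : b21 (T - S) = b21 T - b21 S := by
  ext x; simp [b21_apply]
lemma b22_sub (T S : (X × Y) →L[ℝ] (X' × Y')) : b22 (T - S) = b22 T - b22 S := by
  ext y; simp [b22_apply]

lemma norm_b11_le (T : (X × Y) →L[ℝ] (X' × Y')) : ‖b11 T‖ ≤ ‖T‖ := by
  refine opNorm_le_bound _ (norm_nonneg T) fun x => ?_
  calc ‖b11 T x‖ = ‖(T (x, 0)).1‖ := rfl
    _ ≤ ‖T (x, 0)‖ := norm_fst_le _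
    _ ≤ ‖T‖ * ‖((x, 0) : X × Y)‖ := T.le_opNorm _
    _ = ‖T‖ * ‖x‖ := by rw [Prod.norm_def]; simp [max_eq_left (norm_nonneg x)]

lemma norm_b12_le (T : (X × Y) →L[ℝ] (X' × Y')) : ‖b12 T‖ ≤ ‖T‖ := by
  refine opNorm_le_bound _ (norm_nonneg T) fun y => ?_
  calc ‖b12 T y‖ = ‖(T (0, y)).1‖ := rfl
    _ ≤ ‖T (0, y)‖ := norm_fst_le _
    _ ≤ ‖T‖ * ‖((0, y) : X × Y)‖ := T.le_opNorm _
    _ = ‖T‖ * ‖y‖ := by rw [Prod.norm_def]; simp [max_eq_right (norm_nonneg y)]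

lemma norm_b21_le (T : (X × Y) →L[ℝ] (X' × Y')) : ‖b21 T‖ ≤ ‖T‖ := by
  refine opNorm_le_bound _ (norm_nonneg T) fun x => ?_
  calc ‖b21 T x‖ = ‖(T (x, 0)).2‖ := rfl
    _ ≤ ‖T (x, 0)‖ := norm_snd_le _
    _ ≤ ‖T‖ * ‖((x, 0) : X × Y)‖ := T.le_opNorm _
    _ = ‖T‖ * ‖x‖ := by rw [Prod.norm_def]; simp [max_eq_left (norm_nonneg x)]

lemma norm_b22_le (T : (X × Y) →L[ℝ] (X' × Y')) : ‖b22 T‖ ≤ ‖T‖ := by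
  refine opNorm_le_bound _ (norm_nonneg T) fun y => ?_
  calc ‖b22 T y‖ = ‖(T (0, y)).2‖ := rfl
    _ ≤ ‖T (0, y)‖ := norm_snd_le _
    _ ≤ ‖T‖ * ‖((0, y) : X × Y)‖ := T.le_opNorm _
    _ = ‖T‖ * ‖y‖ := by rw [Prod.norm_def]; simp [max_eq_right (norm_nonneg y)]

lemma norm_blk_diag_le (A : X →L[ℝ] X') (D : Y →L[ℝ] Y') :
    ‖blk A 0 0 D‖ ≤ max ‖A‖ ‖D‖ := by
  refine opNorm_le_bound _ (le_max_of_le_left (norm_nonneg A)) fun z => ?_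
  obtain ⟨x, y⟩ := z
  rw [blk_apply]
  simp only [zero_apply, add_zero, zero_add, Prod.norm_def]
  have hx : ‖x‖ ≤ max ‖x‖ ‖y‖ := le_max_left _ _
  have hy : ‖y‖ ≤ max ‖x‖ ‖y‖ := le_max_right _ _
  refine max_le ?_ ?_
  · calc ‖A x‖ ≤ ‖A‖ * ‖x‖ := A.le_opNorm x
      _ ≤ max ‖A‖ ‖D‖ * max ‖x‖ ‖y‖ := by
        apply mul_le_mul (le_max_left _ _) hx (norm_nonneg x) (le_max_of_le_left (norm_nonneg A))
  · calc ‖D y‖ ≤ ‖D‖ * ‖y‖ := D.le_opNorm y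
      _ ≤ max ‖A‖ ‖D‖ * max ‖x‖ ‖y‖ := by
        apply mul_le_mul (le_max_right _ _) hy (norm_nonneg y) (le_max_of_le_left (norm_nonneg A))

end myblocks

/-- `U` can be approximated in operator norm by invertible operators. -/
def Approx {Z : Type*} [NormedAddCommGroup Z] [NormedSpace ℝ Z] (U : Z →L[ℝ] Z) : Prop :=
  ∀ ε : ℝ, 0 < ε → ∃ W W' : Z →L[ℝ] Z,
    W.comp W' = ContinuousLinearMap.id ℝ Z ∧ W'.comp W = ContinuousLinearMap.id ℝ Z ∧
    ‖U - W‖ < ε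

section approx

variable {Z Z' : Type*} [NormedAddCommGroup Z] [NormedSpace ℝ Z]
  [NormedAddCommGroup Z'] [NormedSpace ℝ Z']

lemma pointwise_of_comp_id {F : Z →L[ℝ] Z'} {G : Z' →L[ℝ] Z}
    (h : F.comp G = ContinuousLinearMap.id ℝ Z') : ∀ z, F (G z) = z := fun z => by
  simpa using ContinuousLinearMap.ext_iff.mp h z

/-- Approximability is preserved by sandwiching with invertible operators. -/
lemma Approx.conj (E : Z' →L[ℝ] Z) (Einv : Z →L[ℝ] Z') (F : Z →L[ℝ] Z') (Finv : Z' →L[ℝ] Z)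
    (hEa : E.comp Einv = ContinuousLinearMap.id ℝ Z)
    (hEb : Einv.comp E = ContinuousLinearMap.id ℝ Z')
    (hFa : F.comp Finv = ContinuousLinearMap.id ℝ Z')
    (hFb : Finv.comp F = ContinuousLinearMap.id ℝ Z)
    {T : Z' →L[ℝ] Z'} (h : Approx T) : Approx (E.comp (T.comp F)) := by
  intro ε hε
  have hpos : (0:ℝ) < (‖E‖ + 1) * (‖F‖ + 1) := by positivity
  obtain ⟨W, W', hWW', hW'W, hW⟩ := h (ε / ((‖E‖ + 1) * (‖F‖ + 1))) (by positivity)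
  have hEa' := pointwise_of_comp_id hEa
  have hEb' := pointwise_of_comp_id hEb
  have hFa' := pointwise_of_comp_id hFa
  have hFb' := pointwise_of_comp_id hFb
  have hWW'' := pointwise_of_comp_id hWW'
  have hW'W' := pointwise_of_comp_id hW'W
  refine ⟨E.comp (W.comp F), Finv.comp (W'.comp Einv), ?_, ?_, ?_⟩
  · ext z; simp [comp_apply, hFa', hWW'', hEa']
  · ext z; simp [comp_apply, hEb', hW'W', hFb']
  · have heq : E.comp (T.comp F) - E.comp (W.comp F) = E.comp ((T - W).comp F) := by
      ext z; simp [comp_apply]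
    rw [heq]
    have h1 : ‖E.comp ((T - W).comp F)‖ ≤ ‖E‖ * (‖T - W‖ * ‖F‖) :=
      le_trans (opNorm_comp_le _ _) (by
        gcongr
        exact opNorm_comp_le _ _)
    have h2 : ‖E‖ * (‖T - W‖ * ‖F‖) < ε := by
      have hd : ‖T - W‖ < ε / ((‖E‖ + 1) * (‖F‖ + 1)) := hW
      have hE0 : (0:ℝ) ≤ ‖E‖ := norm_nonneg _
      have hF0 : (0:ℝ) ≤ ‖F‖ := norm_nonneg _
      have hT0 : (0:ℝ) ≤ ‖T - W‖ := norm_nonneg _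
      have hmul : ‖T - W‖ * ((‖E‖ + 1) * (‖F‖ + 1)) < ε := (lt_div_iff₀ hpos).mp hd
      nlinarith [mul_pos (add_pos_of_nonneg_of_pos hE0 one_pos) (add_pos_of_nonneg_of_pos hF0 one_pos)]
    exact lt_of_le_of_lt h1 h2

end approx

section extension

variable {X X₀ : Type*} [NormedAddCommGroup X] [NormedSpace ℝ X] [CompleteSpace X]
  [NormedAddCommGroup X₀] [NormedSpace ℝ X₀] [CompleteSpace X₀]

/-- If `U` is approximable by invertibles, so is `U ⊕ I`. -/
lemma Approx.blkExt {U : X →L[ℝ] X} (h : Approx U) :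
    Approx (blk U 0 0 (ContinuousLinearMap.id ℝ X₀)) := by
  intro ε hε
  obtain ⟨W, W', hWW', hW'W, hW⟩ := h ε hε
  have hWW'' := pointwise_of_comp_id hWW'
  have hW'W' := pointwise_of_comp_id hW'W
  refine ⟨blk W 0 0 (ContinuousLinearMap.id ℝ X₀), blk W' 0 0 (ContinuousLinearMap.id ℝ X₀),
    ?_, ?_, ?_⟩
  · refine ContinuousLinearMap.ext fun z => ?_
    obtain ⟨x, y⟩ := z
    simp [comp_apply, blk_apply, hWW'']
  · refine ContinuousLinearMap.ext fun z => ?_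
    obtain ⟨x, y⟩ := z
    simp [comp_apply, blk_apply, hW'W']
  · have heq : blk U 0 0 (ContinuousLinearMap.id ℝ X₀) - blk W 0 0 (ContinuousLinearMap.id ℝ X₀)
        = blk (U - W) 0 0 0 := by
      refine ContinuousLinearMap.ext fun z => ?_
      obtain ⟨x, y⟩ := z
      simp [blk_apply]
    rw [heq]
    refine lt_of_le_of_lt (le_trans (norm_blk_diag_le _ _) ?_) hW
    simp [norm_nonneg]

/-- Schur-complement argument: if `U ⊕ I` is approximable by invertibles, so is `U`. -/
lemma Approx.ofBlkExt {U : X →L[ℝ] X}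
    (h : Approx (blk U 0 0 (ContinuousLinearMap.id ℝ X₀))) : Approx U := by
  intro ε hε
  set δ : ℝ := min (ε / 4) (1 / 2) with hδdef
  have hδpos : 0 < δ := lt_min (by positivity) (by norm_num)
  have hδhalf : δ ≤ 1 / 2 := min_le_right _ _
  have hδε : δ ≤ ε / 4 := min_le_left _ _
  obtain ⟨T, T', hTT', hT'T, hT⟩ := h δ hδpos
  have hTT'' := pointwise_of_comp_id hTT'
  have hT'T' := pointwise_of_comp_id hT'T
  set M := blk U 0 0 (ContinuousLinearMap.id ℝ X₀) - T with hM
  set A := b11 T with hA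
  set B := b12 T with hB
  set C := b21 T with hC
  set D := b22 T with hD
  -- block norm estimates
  have hUA : ‖U - A‖ < δ := by
    have : U - A = b11 M := by
      rw [hM, b11_sub, b11_blk]
    rw [this]; exact lt_of_le_of_lt (norm_b11_le M) hT
  have hBn : ‖B‖ < δ := by
    have : B = -(b12 M) := by rw [hM, b12_sub, b12_blk]; simp [hB]
    rw [this, norm_neg]; exact lt_of_le_of_lt (norm_b12_le M) hT
  have hCn : ‖C‖ < δ := by
    have : C = -(b21 M) := by rw [hM, b21_sub, b21_blk]; simp [hC]
    rw [this, norm_neg]; exact lt_of_le_of_lt (norm_b21_le M) hT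
  have hDn : ‖(1 : X₀ →L[ℝ] X₀) - D‖ < δ := by
    have : (1 : X₀ →L[ℝ] X₀) - D = b22 M := by
      rw [hM, b22_sub, b22_blk, ContinuousLinearMap.one_def]
    rw [this]; exact lt_of_le_of_lt (norm_b22_le M) hT
  -- invert D via geometric series
  set t : X₀ →L[ℝ] X₀ := 1 - D with ht
  have htn : ‖t‖ < 1 := lt_of_lt_of_le hDn (le_trans hδhalf (by norm_num))
  set Dinv : X₀ →L[ℝ] X₀ := ∑' n : ℕ, t ^ n with hDinv
  have hDinvD : Dinv * D = 1 := by
    have := geom_series_mul_neg t htn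
    rwa [ht, sub_sub_cancel] at this
  have hDDinv : D * Dinv = 1 := by
    have := mul_neg_geom_series t htn
    rwa [ht, sub_sub_cancel] at this
  have hDinvD' : ∀ z, Dinv (D z) = z := fun z => by
    have := ContinuousLinearMap.ext_iff.mp hDinvD z
    simpa [ContinuousLinearMap.mul_apply] using this
  have hDDinv' : ∀ z, D (Dinv z) = z := fun z => by
    have := ContinuousLinearMap.ext_iff.mp hDDinv z
    simpa [ContinuousLinearMap.mul_apply] using this
  have hDinvn : ‖Dinv‖ ≤ 2 := by
    have h1 : ‖Dinv‖ ≤ ‖(1 : X₀ →L[ℝ] X₀)‖ - 1 + (1 - ‖t‖)⁻¹ :=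
      tsum_geometric_le_of_norm_lt_one t htn
    have h2 : ‖(1 : X₀ →L[ℝ] X₀)‖ ≤ 1 := by
      rw [ContinuousLinearMap.one_def]; exact norm_id_le
    have h3 : ‖t‖ ≤ 1 / 2 := le_of_lt (lt_of_lt_of_le hDn hδhalf)
    have h4 : (1 - ‖t‖)⁻¹ ≤ 2 := by
      rw [inv_le_comm₀ (by linarith) (by norm_num)]
      linarith
    linarith
  -- the Schur complement and its inverse
  set S : X →L[ℝ] X := A - B.comp (Dinv.comp C) with hS
  set P : X →L[ℝ] X := b11 T' with hP
  set Q : X₀ →L[ℝ] X := b12 T' with hQ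
  set R : X →L[ℝ] X₀ := b21 T' with hR
  -- pointwise block identities
  have key1 : ∀ x : X, A (P x) + B (R x) = x ∧ C (P x) + D (R x) = 0 := by
    intro x
    have h1 : T (T' (x, 0)) = (x, 0) := hTT'' (x, 0)
    have h2 : T' (x, (0 : X₀)) = (P x, R x) := by
      rw [apply_eq_blocks]; simp [hP, hR]
    rw [h2, apply_eq_blocks] at h1
    exact ⟨congrArg Prod.fst h1, congrArg Prod.snd h1⟩
  have key2 : ∀ x : X, P (A x) + Q (C x) = x := by
    intro x
    have h1 : T' (T (x, 0)) = (x, 0) := hT'T' (x, 0)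
    have h2 : T (x, (0 : X₀)) = (A x, C x) := by
      rw [apply_eq_blocks]; simp [hA, hC]
    rw [h2, apply_eq_blocks] at h1
    exact congrArg Prod.fst h1
  have key3 : ∀ y : X₀, P (B y) + Q (D y) = 0 := by
    intro y
    have h1 : T' (T (0, y)) = (0, y) := hT'T' (0, y)
    have h2 : T ((0 : X), y) = (B y, D y) := by
      rw [apply_eq_blocks]; simp [hB, hD]
    rw [h2, apply_eq_blocks] at h1
    exact congrArg Prod.fst h1
  clear_value Dinv
  refine ⟨S, P, ?_, ?_, ?_⟩
  · -- S ∘ P = id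
    ext x
    have h1 := (key1 x).1
    have h2 := (key1 x).2
    have h3 : Dinv (C (P x)) = -(R x) := by
      have hc : C (P x) = -(D (R x)) := eq_neg_of_add_eq_zero_left h2
      rw [hc, map_neg, hDinvD']
    simp only [comp_apply, ContinuousLinearMap.coe_id', id_eq, hS,
      ContinuousLinearMap.sub_apply, comp_apply]
    rw [h3]
    simp only [map_neg, sub_neg_eq_add]
    exact h1
  · -- P ∘ S = id
    ext x
    have h2 := key3 (Dinv (C x))
    rw [hDDinv'] at h2
    have h1 := key2 x
    simp only [comp_apply, ContinuousLinearMap.coe_id', id_eq, hS,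
      ContinuousLinearMap.sub_apply, comp_apply, map_sub]
    have h3 : P (B (Dinv (C x))) = -(Q (C x)) := eq_neg_of_add_eq_zero_left h2
    rw [h3, sub_neg_eq_add]
    exact h1
  · -- norm estimate
    have hnorm : ‖U - S‖ ≤ ‖U - A‖ + ‖B‖ * (‖Dinv‖ * ‖C‖) := by
      have : U - S = (U - A) + B.comp (Dinv.comp C) := by rw [hS]; abel
      rw [this]
      refine le_trans (norm_add_le _ _) ?_
      gcongr
      exact le_trans (opNorm_comp_le _ _) (by gcongr; exact opNorm_comp_le _ _)
    have hB0 : (0:ℝ) ≤ ‖B‖ := norm_nonneg _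
    have hC0 : (0:ℝ) ≤ ‖C‖ := norm_nonneg _
    have hDi0 : (0:ℝ) ≤ ‖Dinv‖ := norm_nonneg _
    have hprod : ‖B‖ * (‖Dinv‖ * ‖C‖) ≤ δ * (2 * δ) :=
      mul_le_mul hBn.le (mul_le_mul hDinvn hCn.le hC0 (by norm_num)) (by positivity) hδpos.le
    have h1 : ‖U - S‖ < δ + δ * (2 * δ) := by linarith
    have h2δ : 2 * δ ≤ 1 := by linarith
    have h2 : δ * (2 * δ) ≤ δ * 1 := mul_le_mul_of_nonneg_left h2δ hδpos.le
    linarith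

end extension


/-- If `U` and `V` are equivalent after extension, then `U` can be approximated in norm by
invertible operators iff `V` can. -/
theorem stmt11 {X Y X₀ Y₀ : Type*} [NormedAddCommGroup X] [NormedSpace ℝ X] [CompleteSpace X]
    [NormedAddCommGroup Y] [NormedSpace ℝ Y] [CompleteSpace Y]
    [NormedAddCommGroup X₀] [NormedSpace ℝ X₀] [CompleteSpace X₀]
    [NormedAddCommGroup Y₀] [NormedSpace ℝ Y₀] [CompleteSpace Y₀]
    (U : X →L[ℝ] X) (V : Y →L[ℝ] Y)
    (E : (Y × Y₀) →L[ℝ] (X × X₀)) (Einv : (X × X₀) →L[ℝ] (Y × Y₀))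
    (F : (X × X₀) →L[ℝ] (Y × Y₀)) (Finv : (Y × Y₀) →L[ℝ] (X × X₀))
    (hE1 : E.comp Einv = ContinuousLinearMap.id ℝ (X × X₀))
    (hE2 : Einv.comp E = ContinuousLinearMap.id ℝ (Y × Y₀))
    (hF1 : F.comp Finv = ContinuousLinearMap.id ℝ (Y × Y₀))
    (hF2 : Finv.comp F = ContinuousLinearMap.id ℝ (X × X₀))
    (hEq : blk U 0 0 (ContinuousLinearMap.id ℝ X₀) =
      E.comp ((blk V 0 0 (ContinuousLinearMap.id ℝ Y₀)).comp F)) :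
    (∀ ε : ℝ, 0 < ε → ∃ W W' : X →L[ℝ] X,
      W.comp W' = ContinuousLinearMap.id ℝ X ∧ W'.comp W = ContinuousLinearMap.id ℝ X ∧
      ‖U - W‖ < ε) ↔
    (∀ ε : ℝ, 0 < ε → ∃ W W' : Y →L[ℝ] Y,
      W.comp W' = ContinuousLinearMap.id ℝ Y ∧ W'.comp W = ContinuousLinearMap.id ℝ Y ∧
      ‖V - W‖ < ε) := by
  have hsand : ∀ T : (Y × Y₀) →L[ℝ] (Y × Y₀),
      Einv.comp ((E.comp (T.comp F)).comp Finv) = T := by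
    intro T
    refine ContinuousLinearMap.ext fun z => ?_
    have h1 := pointwise_of_comp_id hF1
    have h2 := pointwise_of_comp_id hE2
    simp [comp_apply, h1, h2]
  constructor
  · intro h
    have h1 : Approx (blk U 0 0 (ContinuousLinearMap.id ℝ X₀)) := Approx.blkExt h
    have h2 := Approx.conj Einv E Finv F hE2 hE1 hF2 hF1 h1
    rw [hEq, hsand] at h2
    exact Approx.ofBlkExt h2
  · intro h
    have h1 : Approx (blk V 0 0 (ContinuousLinearMap.id ℝ Y₀)) := Approx.blkExt h
    have h2 := Approx.conj E Einv F Finv hE1 hE2 hF1 hF2 h1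
    rw [← hEq] at h2
    exact Approx.ofBlkExt h2
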